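/- Let G be a tree grammar with finitely many nonterminals and finitely many rules, and cost function with cost(r) > 0 for every rule r. Let X be a nonterminal from which at least one program is generated. Then there exists a minimal-cost program p₀ generated from X that satisfies condition (*): no nonterminal occurs twice along any root-to-leaf path of p₀; in particular, the depth of p₀ (the number of nodes on a longest root-to-leaf path) is at most the number of nonterminals of G. -/

import Mathlib

/-- Finitely-branching trees with nodes labeled by elements of `R` (derivation trees). -/
inductive Tree' (R : Type) : Type
  | node : R → List (Tree' R) → Tree' R

/-- The label of the root node. -/
def Tree'.rootLabel {R : Type} : Tree' R → R
  | .node r _ => r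

/-- A tree grammar: nonterminals `Γ`, derivation rules `R`, each rule having a
left-hand nonterminal and a list of argument nonterminals. -/
structure TreeGrammar where
  Γ : Type
  R : Type
  lhs : R → Γ
  args : R → List Γ

/-- Well-formed derivation trees (programs) of a tree grammar. -/
inductive TreeGrammar.WF (G : TreeGrammar) : Tree' G.R → Prop
  | node (r : G.R) (ts : List (Tree' G.R))
      (hlen : ts.length = (G.args r).length)
      (hwf : ∀ t ∈ ts, G.WF t)
      (hlhs : ∀ i : ℕ, (h : i < ts.length) →
        G.lhs (ts[i].rootLabel) = (G.args r)[i]'(hlen ▸ h)) :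
      G.WF (Tree'.node r ts)

/-- `p` is a program generated from the nonterminal `X`. -/
def TreeGrammar.GenFrom (G : TreeGrammar) (X : G.Γ) (p : Tree' G.R) : Prop :=
  G.WF p ∧ G.lhs p.rootLabel = X

/-- The cost of a program, extending a cost function on rules. -/
def costP {R : Type} (cost : R → ℝ) : Tree' R → ℝ
  | .node r ts => cost r + (ts.attach.map (fun t => costP cost t.1)).sum
decreasing_by
  have := List.sizeOf_lt_of_mem t.2
  simp only [Tree'.node.sizeOf_spec]
  omega

/-- The number of nodes of a derivation tree. -/
def sizeP {R : Type} : Tree' R → ℕ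
  | .node _ ts => 1 + (ts.attach.map (fun t => sizeP t.1)).sum
decreasing_by
  have := List.sizeOf_lt_of_mem t.2
  simp only [Tree'.node.sizeOf_spec]
  omega

/-- The depth of a derivation tree: number of nodes on a longest root-to-leaf path. -/
def depthP {R : Type} : Tree' R → ℕ
  | .node _ ts => 1 + (ts.attach.map (fun t => depthP t.1)).foldr max 0
decreasing_by
  have := List.sizeOf_lt_of_mem t.2
  simp only [Tree'.node.sizeOf_spec]
  omega

/-- `p'` is a successor of `p` with respect to the nonterminal `X`:
`p'` is generated from `X`, has strictly larger cost than `p`, and no program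
generated from `X` has cost strictly between the two. -/
def IsSucc (G : TreeGrammar) (cost : G.R → ℝ) (X : G.Γ) (p p' : Tree' G.R) : Prop :=
  G.GenFrom X p' ∧ costP cost p < costP cost p' ∧
    ∀ p'', G.GenFrom X p'' →
      ¬(costP cost p < costP cost p'' ∧ costP cost p'' < costP cost p')

/-- `X` occurs as the left-hand nonterminal of the rule labeling some node of the tree. -/
inductive OccursLhs (G : TreeGrammar) (X : G.Γ) : Tree' G.R → Prop
  | here (r : G.R) (ts : List (Tree' G.R)) : G.lhs r = X → OccursLhs G X (.node r ts)
  | there (r : G.R) (ts : List (Tree' G.R)) (t : Tree' G.R) :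
      t ∈ ts → OccursLhs G X t → OccursLhs G X (.node r ts)

/-- Condition (*): along every root-to-leaf path, no nonterminal occurs twice as the
left-hand nonterminal of the rules labeling the nodes on the path. -/
inductive StarCond (G : TreeGrammar) : Tree' G.R → Prop
  | node (r : G.R) (ts : List (Tree' G.R))
      (hsub : ∀ t ∈ ts, StarCond G t)
      (hnew : ∀ t ∈ ts, ¬ OccursLhs G (G.lhs r) t) :
      StarCond G (.node r ts)

/-- `IsSubtree s t`: `s` is the subtree of `t` rooted at some node of `t`. -/
inductive IsSubtree {R : Type} : Tree' R → Tree' R → Prop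
  | refl (t : Tree' R) : IsSubtree t t
  | child (s : Tree' R) (r : R) (ts : List (Tree' R)) (t : Tree' R) :
      t ∈ ts → IsSubtree s t → IsSubtree s (.node r ts)

/-- `IsStrictSubtree s t`: `s` is the subtree of `t` rooted at a strict descendant
of the root of `t`. -/
inductive IsStrictSubtree {R : Type} : Tree' R → Tree' R → Prop
  | child (s : Tree' R) (r : R) (ts : List (Tree' R)) (t : Tree' R) :
      t ∈ ts → IsSubtree s t → IsStrictSubtree s (.node r ts)

/-- The subtree of a tree at a given position (a list of child indices), if it exists. -/
def subtreeAt {R : Type} : Tree' R → List ℕ → Option (Tree' R)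
  | t, [] => some t
  | .node _ ts, i :: is =>
      match ts[i]? with
      | some t => subtreeAt t is
      | none => none

/-- Replacing the subtree at a given position by `q`. -/
def replaceAt {R : Type} : Tree' R → List ℕ → Tree' R → Tree' R
  | _, [], q => q
  | .node r ts, i :: is, q =>
      match ts[i]? with
      | some t => .node r (ts.set i (replaceAt t is q))
      | none => .node r ts

open scoped ENNReal in
/-- The Bellman operator associated with a tree grammar and a cost function. -/
noncomputable def bellman (G : TreeGrammar) (cost : G.R → ℝ) (c : G.Γ → ℝ≥0∞) : G.Γ → ℝ≥0∞ :=
  fun X => ⨅ r ∈ {r : G.R | G.lhs r = X},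
    (ENNReal.ofReal (cost r) + ((G.args r).map c).sum)

section Helpers

lemma Tree'.strongInd {R : Type} {P : Tree' R → Prop}
    (h : ∀ r ts, (∀ t ∈ ts, P t) → P (.node r ts)) : ∀ t, P t
  | .node r ts => h r ts (fun t ht => Tree'.strongInd h t)
decreasing_by
  have := List.sizeOf_lt_of_mem ht
  simp only [Tree'.node.sizeOf_spec]
  omega

lemma costP_node {R : Type} (cost : R → ℝ) (r : R) (ts : List (Tree' R)) :
    costP cost (.node r ts) = cost r + (ts.map (costP cost)).sum := by
  rw [costP]
  simp [List.attach_map_val]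

lemma sizeP_node {R : Type} (r : R) (ts : List (Tree' R)) :
    sizeP (Tree'.node r ts) = 1 + (ts.map sizeP).sum := by
  rw [sizeP]
  simp [List.attach_map_val]

lemma depthP_node {R : Type} (r : R) (ts : List (Tree' R)) :
    depthP (Tree'.node r ts) = 1 + (ts.map depthP).foldr max 0 := by
  rw [depthP]
  simp [List.attach_map_val]

lemma costP_pos {R : Type} (cost : R → ℝ) (hpos : ∀ r, 0 < cost r) (t : Tree' R) :
    0 < costP cost t := by
  induction t using Tree'.strongInd with
  | h r ts ih =>
    rw [costP_node]
    have : 0 ≤ (ts.map (costP cost)).sum := by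
      apply List.sum_nonneg
      intro x hx
      obtain ⟨t, ht, rfl⟩ := List.mem_map.1 hx
      exact (ih t ht).le
    linarith [hpos r]

lemma one_le_depthP {R : Type} (t : Tree' R) : 1 ≤ depthP t := by
  cases t with
  | node r ts => rw [depthP_node]; omega

lemma le_foldr_max {l : List ℕ} {x : ℕ} (hx : x ∈ l) : x ≤ l.foldr max 0 := by
  induction l with
  | nil => simp at hx
  | cons a l ih =>
    simp only [List.foldr_cons]
    rcases List.mem_cons.1 hx with rfl | h
    · exact le_max_left _ _
    · exact le_trans (ih h) (le_max_right _ _)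

lemma foldr_max_le {l : List ℕ} {N : ℕ} (h : ∀ x ∈ l, x ≤ N) : l.foldr max 0 ≤ N := by
  induction l with
  | nil => simp
  | cons a l ih =>
    simp only [List.foldr_cons, max_le_iff]
    exact ⟨h a (by simp), ih (fun x hx => h x (List.mem_cons_of_mem _ hx))⟩

end Helpers
section Sub

lemma mem_map_sum_le {α : Type} (f : α → ℝ) (hnn : ∀ a, 0 ≤ f a) {l : List α} {a : α}
    (ha : a ∈ l) : f a ≤ (l.map f).sum := by
  induction l with
  | nil => simp at ha
  | cons b l ih =>
    simp only [List.map_cons, List.sum_cons]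
    rcases List.mem_cons.1 ha with rfl | h
    · have : 0 ≤ (l.map f).sum := List.sum_nonneg (by rintro x hx; obtain ⟨c,_,rfl⟩ := List.mem_map.1 hx; exact hnn c)
      linarith
    · linarith [ih h, hnn b]

lemma costP_le_of_subtree {R : Type} (cost : R → ℝ) (hpos : ∀ r, 0 < cost r)
    {s t : Tree' R} (h : IsSubtree s t) : costP cost s ≤ costP cost t := by
  induction h with
  | refl => exact le_refl _
  | child r ts t hmem _ ih =>
    rw [costP_node]
    have h1 : costP cost t ≤ (ts.map (costP cost)).sum :=
      mem_map_sum_le _ (fun a => (costP_pos cost hpos a).le) hmem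
    linarith [hpos r]

lemma costP_lt_of_strictSubtree {R : Type} (cost : R → ℝ) (hpos : ∀ r, 0 < cost r)
    {s t : Tree' R} (h : IsStrictSubtree s t) : costP cost s < costP cost t := by
  cases h with
  | child r ts t hmem hsub =>
    rw [costP_node]
    have h1 : costP cost t ≤ (ts.map (costP cost)).sum :=
      mem_map_sum_le _ (fun a => (costP_pos cost hpos a).le) hmem
    have h2 := costP_le_of_subtree cost hpos hsub
    linarith [hpos r]

lemma mem_map_sum_le_nat {α : Type} (f : α → ℕ) {l : List α} {a : α}
    (ha : a ∈ l) : f a ≤ (l.map f).sum := by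
  induction l with
  | nil => simp at ha
  | cons b l ih =>
    simp only [List.map_cons, List.sum_cons]
    rcases List.mem_cons.1 ha with rfl | h
    · omega
    · have := ih h; omega

lemma sizeP_le_of_subtree {R : Type} {s t : Tree' R} (h : IsSubtree s t) :
    sizeP s ≤ sizeP t := by
  induction h with
  | refl => exact le_refl _
  | child r ts t hmem _ ih =>
    rw [sizeP_node]
    have := mem_map_sum_le_nat sizeP hmem
    omega

lemma sizeP_lt_of_strictSubtree {R : Type} {s t : Tree' R} (h : IsStrictSubtree s t) :
    sizeP s < sizeP t := by
  cases h with
  | child r ts t hmem hsub =>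
    rw [sizeP_node]
    have h1 := mem_map_sum_le_nat sizeP hmem
    have h2 := sizeP_le_of_subtree hsub
    omega

lemma WF_of_subtree {G : TreeGrammar} {s t : Tree' G.R} (h : IsSubtree s t)
    (hwf : G.WF t) : G.WF s := by
  induction h with
  | refl => exact hwf
  | child r ts t hmem _ ih =>
    cases hwf with
    | node _ _ hlen hwf' hlhs => exact ih (hwf' t hmem)

lemma occursLhs_iff_subtree {G : TreeGrammar} {X : G.Γ} {t : Tree' G.R} :
    OccursLhs G X t ↔ ∃ s, IsSubtree s t ∧ G.lhs s.rootLabel = X := by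
  constructor
  · intro h
    induction h with
    | here r ts hr => exact ⟨.node r ts, .refl _, hr⟩
    | there r ts t hmem _ ih =>
      obtain ⟨s, hsub, hs⟩ := ih
      exact ⟨s, .child s r ts t hmem hsub, hs⟩
  · rintro ⟨s, hsub, hs⟩
    induction hsub with
    | refl => cases s with | node r ts => exact .here r ts hs
    | child r ts t hmem _ ih => exact .there r ts t hmem ih

end Sub
section Collapse

lemma IsSubtree.trans' {R : Type} {a b c : Tree' R} (h1 : IsSubtree a b) (h2 : IsSubtree b c) :
    IsSubtree a c := by
  induction h2 with
  | refl => exact h1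
  | child r ts t hmem _ ih => exact .child a r ts t hmem ih

lemma exists_forall₂ {α β : Type} {P : α → β → Prop} :
    ∀ (l : List α), (∀ a ∈ l, ∃ b, P a b) → ∃ l', List.Forall₂ P l l' := by
  intro l
  induction l with
  | nil => exact fun _ => ⟨[], .nil⟩
  | cons a l ih =>
    intro h
    obtain ⟨b, hb⟩ := h a (by simp)
    obtain ⟨l', hl'⟩ := ih (fun a ha => h a (List.mem_cons_of_mem _ ha))
    exact ⟨b :: l', .cons hb hl'⟩

lemma forall₂_mem_right {α β : Type} {P : α → β → Prop} {l : List α} {l' : List β}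
    (h : List.Forall₂ P l l') {b : β} (hb : b ∈ l') : ∃ a ∈ l, P a b := by
  induction h with
  | nil => simp at hb
  | cons hab h ih =>
    rcases List.mem_cons.1 hb with rfl | hb'
    · exact ⟨_, by simp, hab⟩
    · obtain ⟨a, ha, hPa⟩ := ih hb'
      exact ⟨a, List.mem_cons_of_mem _ ha, hPa⟩

lemma forall₂_sum_le {α β : Type} {P : α → β → Prop} {f : α → ℝ} {g : β → ℝ}
    (hle : ∀ a b, P a b → g b ≤ f a) :
    ∀ {l : List α} {l' : List β}, List.Forall₂ P l l' → (l'.map g).sum ≤ (l.map f).sum := by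
  intro l l' h
  induction h with
  | nil => simp
  | cons hab h ih =>
    simp only [List.map_cons, List.sum_cons]
    have := hle _ _ hab
    linarith

lemma child_size_lt {R : Type} {r : R} {ts : List (Tree' R)} {c : Tree' R} (hc : c ∈ ts) :
    sizeP c < sizeP (Tree'.node r ts) := by
  rw [sizeP_node]
  have := mem_map_sum_le_nat sizeP hc
  omega

lemma collapse (G : TreeGrammar) (cost : G.R → ℝ) (hpos : ∀ r, 0 < cost r) :
    ∀ (n : ℕ) (p : Tree' G.R), sizeP p ≤ n → G.WF p →
    ∃ p', G.WF p' ∧ G.lhs p'.rootLabel = G.lhs p.rootLabel ∧ StarCond G p' ∧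
      costP cost p' ≤ costP cost p ∧ (∀ Y, OccursLhs G Y p' → OccursLhs G Y p) := by
  intro n
  induction n with
  | zero =>
    intro p hsz _
    cases p with
    | node r ts => rw [sizeP_node] at hsz; omega
  | succ n ih =>
    rintro p hsz hwf
    cases p with
    | node r ts =>
    by_cases hq : ∃ q, IsStrictSubtree q (Tree'.node r ts) ∧ G.lhs q.rootLabel = G.lhs r
    · obtain ⟨q, hqs, hql⟩ := hq
      have hqsub : IsSubtree q (Tree'.node r ts) := by
        cases hqs with
        | child r' ts' t hmem hsub => exact .child _ _ _ t hmem hsub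
      have hszq : sizeP q ≤ n := by
        have := sizeP_lt_of_strictSubtree hqs
        omega
      obtain ⟨p', h1, h2, h3, h4, h5⟩ := ih q hszq (WF_of_subtree hqsub hwf)
      refine ⟨p', h1, by rw [h2, hql]; rfl, h3, ?_, ?_⟩
      · exact le_trans h4 (costP_le_of_subtree cost hpos hqsub)
      · intro Y hY
        obtain ⟨s, hssub, hsl⟩ := occursLhs_iff_subtree.1 (h5 Y hY)
        exact occursLhs_iff_subtree.2 ⟨s, hssub.trans' hqsub, hsl⟩
    · cases hwf with
      | node _ _ hlen hwfc hlhs =>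
      have hch : ∀ c ∈ ts, ∃ c', G.WF c' ∧ G.lhs c'.rootLabel = G.lhs c.rootLabel ∧
          StarCond G c' ∧ costP cost c' ≤ costP cost c ∧
          (∀ Y, OccursLhs G Y c' → OccursLhs G Y c) := by
        intro c hc
        have : sizeP c ≤ n := by have := child_size_lt (r := r) hc; omega
        exact ih c this (hwfc c hc)
      obtain ⟨ts', hf⟩ := exists_forall₂ ts hch
      have hlen' : ts.length = ts'.length := hf.length_eq
      have hget := (List.forall₂_iff_get.1 hf).2
      refine ⟨.node r ts', ?_, rfl, ?_, ?_, ?_⟩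
      · refine .node r ts' (by omega) ?_ ?_
        · intro t' ht'
          obtain ⟨c, _, hP⟩ := forall₂_mem_right hf ht'
          exact hP.1
        · intro i hi
          have hQ := hget i (by omega) hi
          simp only [List.get_eq_getElem] at hQ
          have := hlhs i (by omega)
          rw [hQ.2.1]
          exact this
      · refine .node r ts' ?_ ?_
        · intro t' ht'
          obtain ⟨c, _, hP⟩ := forall₂_mem_right hf ht'
          exact hP.2.2.1
        · intro t' ht' hocc
          obtain ⟨c, hc, hP⟩ := forall₂_mem_right hf ht'
          have hoc : OccursLhs G (G.lhs r) c := hP.2.2.2.2 _ hocc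
          obtain ⟨s, hssub, hsl⟩ := occursLhs_iff_subtree.1 hoc
          exact hq ⟨s, .child s r ts c hc hssub, hsl⟩
      · rw [costP_node, costP_node]
        have := forall₂_sum_le (f := costP cost) (g := costP cost)
          (fun a b hab => hab.2.2.2.1) hf
        linarith
      · intro Y hY
        cases hY with
        | here _ _ h => exact .here r ts h
        | there _ _ t' hmem hocc =>
          obtain ⟨c, hc, hP⟩ := forall₂_mem_right hf hmem
          exact .there r ts c hc (hP.2.2.2.2 Y hocc)

end Collapse
section Depth

lemma depth_le_ncard (G : TreeGrammar) [Fintype G.Γ] :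
    ∀ t : Tree' G.R, StarCond G t → depthP t ≤ Set.ncard {Y | OccursLhs G Y t} := by
  intro t h
  induction h with
  | node r ts hsub hnew ih =>
    rw [depthP_node]
    set S := {Y | OccursLhs G Y (Tree'.node r ts)} with hS
    have hSfin : S.Finite := Set.toFinite _
    have hrS : G.lhs r ∈ S := .here r ts rfl
    have h1 : 1 ≤ S.ncard := (Set.ncard_pos hSfin).2 ⟨_, hrS⟩
    have hc : ∀ x ∈ ts.map depthP, x ≤ S.ncard - 1 := by
      intro x hx
      obtain ⟨c, hcmem, rfl⟩ := List.mem_map.1 hx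
      have hsubset : {Y | OccursLhs G Y c} ⊆ S := by
        intro Y hY
        exact .there r ts c hcmem hY
      have hss : {Y | OccursLhs G Y c} ⊂ S :=
        ⟨hsubset, fun hback => hnew c hcmem (hback hrS)⟩
      have hlt := Set.ncard_lt_ncard hss hSfin
      have := ih c hcmem
      omega
    have := foldr_max_le hc
    omega

lemma depth_le_card (G : TreeGrammar) [Fintype G.Γ] {t : Tree' G.R} (h : StarCond G t) :
    depthP t ≤ Fintype.card G.Γ := by
  refine le_trans (depth_le_ncard G t h) ?_
  calc Set.ncard {Y | OccursLhs G Y t} ≤ Set.ncard (Set.univ : Set G.Γ) :=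
        Set.ncard_le_ncard (Set.subset_univ _) Set.finite_univ
    _ = Fintype.card G.Γ := by rw [Set.ncard_univ, Nat.card_eq_fintype_card]

lemma wf_depth_finite (G : TreeGrammar) [Fintype G.R] :
    ∀ d : ℕ, {t : Tree' G.R | G.WF t ∧ depthP t ≤ d}.Finite := by
  intro d
  induction d with
  | zero =>
    convert Set.finite_empty
    ext t
    simp only [Set.mem_setOf_eq, Set.mem_empty_iff_false, iff_false, not_and]
    intro _
    have := one_le_depthP t
    omega
  | succ d ih =>
    set B := Finset.univ.sup (fun r : G.R => (G.args r).length) with hB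
    haveI : Finite {t : Tree' G.R | G.WF t ∧ depthP t ≤ d} := ih.to_subtype
    have hlfin : {l : List {t : Tree' G.R | G.WF t ∧ depthP t ≤ d} | l.length ≤ B}.Finite :=
      List.finite_length_le _ B
    have himg : ((Set.univ : Set G.R) ×ˢ
        {l : List {t : Tree' G.R | G.WF t ∧ depthP t ≤ d} | l.length ≤ B}).Finite :=
      Set.Finite.prod Set.finite_univ hlfin
    refine Set.Finite.subset (himg.image (fun p => Tree'.node p.1 (p.2.map Subtype.val))) ?_
    rintro t ⟨hwf, hd⟩
    cases t with
    | node r ts =>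
      cases hwf with
      | node _ _ hlen hwfc hlhs =>
        have hdc : ∀ c ∈ ts, depthP c ≤ d := by
          intro c hc
          rw [depthP_node] at hd
          have : depthP c ≤ (ts.map depthP).foldr max 0 :=
            le_foldr_max (List.mem_map_of_mem (f := depthP) hc)
          omega
        refine ⟨(r, ts.attach.map (fun c => ⟨c.1, hwfc c.1 c.2, hdc c.1 c.2⟩)), ?_, ?_⟩
        · refine ⟨Set.mem_univ _, ?_⟩
          simp only [Set.mem_setOf_eq, List.length_map, List.length_attach]
          rw [hlen]
          exact Finset.le_sup (f := fun r : G.R => (G.args r).length) (Finset.mem_univ r)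
        · simp [List.map_map, Function.comp_def]

end Depth
/-- there is a minimal-cost program generated from `X` satisfying
condition (*), and in particular of depth at most the number of nonterminals. -/
theorem stmt7 (G : TreeGrammar) [Fintype G.Γ] [Fintype G.R] (cost : G.R → ℝ)
    (hpos : ∀ r, 0 < cost r) (X : G.Γ) (hne : ∃ p : Tree' G.R, G.GenFrom X p) :
    ∃ p₀ : Tree' G.R, G.GenFrom X p₀ ∧
      (∀ p : Tree' G.R, G.GenFrom X p → costP cost p₀ ≤ costP cost p) ∧
      StarCond G p₀ ∧ depthP p₀ ≤ Fintype.card G.Γ := by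

  classical
  set T : Set (Tree' G.R) := {p | G.GenFrom X p ∧ StarCond G p} with hT
  have hTfin : T.Finite := by
    refine Set.Finite.subset (wf_depth_finite G (Fintype.card G.Γ)) ?_
    rintro p ⟨⟨hwf, _⟩, hstar⟩
    exact ⟨hwf, depth_le_card G hstar⟩
  have hTne : T.Nonempty := by
    obtain ⟨p, hwf, hroot⟩ := hne
    obtain ⟨p', h1, h2, h3, _, _⟩ := collapse G cost hpos (sizeP p) p le_rfl hwf
    exact ⟨p', ⟨⟨h1, by rw [h2, hroot]⟩, h3⟩⟩
  obtain ⟨p₀, hp₀T, hmin⟩ := Set.exists_min_image T (costP cost) hTfin hTne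
  refine ⟨p₀, hp₀T.1, ?_, hp₀T.2, depth_le_card G hp₀T.2⟩
  intro p ⟨hwf, hroot⟩
  obtain ⟨p', h1, h2, h3, h4, _⟩ := collapse G cost hpos (sizeP p) p le_rfl hwf
  have hp'T : p' ∈ T := ⟨⟨h1, by rw [h2, hroot]⟩, h3⟩
  exact le_trans (hmin p' hp'T) h4
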